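/- Let C ⊂ X × X be a correspondence with projections x, y: C → X, and suppose D has an m-th CIP D^{(m)} with intermediate divisors L_0 = D, L_1, ..., L_m = D^{(m)} satisfying y^*L_{i−1} = x^*L_i. Let 𝒫 be the path space with maps π, σ, ε satisfying π = x∘ε and π∘σ = y∘ε. Then for every place v and every n ≥ m, λ_v(D, π(σ^{(n)}(Q))) = λ_v(D^{(m)}, π(σ^{(n−m)}(Q))) + O(1) for all Q ∈ 𝒫 for which both sides are defined, with the O(1) independent of Q and n. -/
import Mathlib


/-- The path space of a correspondence `C ⊆ X × X`. -/
def PathSpace {X : Type*} (C : Set (X × X)) : Type _ :=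
  {P : ℕ → X // ∀ i, (P i, P (i + 1)) ∈ C}

/-- The shift map on the path space. -/
def pathShift {X : Type*} (C : Set (X × X)) : PathSpace C → PathSpace C :=
  fun P => ⟨fun i => P.1 (i + 1), fun i => P.2 (i + 1)⟩

lemma pathShift_iter {X : Type*} (C : Set (X × X)) (k : ℕ) (Q : PathSpace C) (i : ℕ) :
    ((pathShift C)^[k] Q).1 i = Q.1 (i + k) := by
  induction k generalizing Q i with
  | zero => rfl
  | succ k ih =>
      rw [Function.iterate_succ_apply, ih]
      show Q.1 (i + k + 1) = Q.1 (i + (k + 1))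
      ring_nf

/- STATEMENT 15: let C ⊆ X × X be a correspondence with projections x, y, and suppose D
has an m-th Correspondence Iterate Pullback D^{(m)} via intermediate divisors
L_0 = D, ..., L_m = D^{(m)} with y^*L_{i−1} = x^*L_i.  Local heights (on X with values
`lamX`, on C with values `lamC`) satisfy functoriality along x and y up to O(1).  Then
for every place v there is c with
|λ_v(D, π(σ^{(n)}(Q))) − λ_v(D^{(m)}, π(σ^{(n−m)}(Q)))| ≤ c for all n ≥ m and all
paths Q, with c independent of Q and n. -/
theorem stmt_15 {X V DivX DivC : Type*} (C : Set (X × X))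
    (xstar ystar : DivX → DivC)
    (lamX : V → DivX → X → ℝ) (lamC : V → DivC → C → ℝ)
    (hxfun : ∀ (v : V) (E : DivX), ∃ c : ℝ, ∀ Q : C,
      |lamC v (xstar E) Q - lamX v E ((Q : X × X).1)| ≤ c)
    (hyfun : ∀ (v : V) (E : DivX), ∃ c : ℝ, ∀ Q : C,
      |lamC v (ystar E) Q - lamX v E ((Q : X × X).2)| ≤ c)
    (m : ℕ) (D Dm : DivX) (L : ℕ → DivX) (hL0 : L 0 = D) (hLm : L m = Dm)
    (hCIP : ∀ i, 1 ≤ i → i ≤ m → ystar (L (i - 1)) = xstar (L i))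
    (v : V) :
    ∃ c : ℝ, ∀ n : ℕ, m ≤ n → ∀ Q : PathSpace C,
      |lamX v D (((pathShift C)^[n] Q).1 0)
        - lamX v Dm (((pathShift C)^[n - m] Q).1 0)| ≤ c := by
  -- constants from functoriality
  choose cx hcx using hxfun v
  choose cy hcy using hyfun v
  -- one-step bound
  have step : ∀ i, 1 ≤ i → i ≤ m → ∀ Qc : C,
      |lamX v (L (i - 1)) ((Qc : X × X).2) - lamX v (L i) ((Qc : X × X).1)|
        ≤ cy (L (i - 1)) + cx (L i) := by
    intro i h1 h2 Qc
    have h3 := hcy (L (i - 1)) Qc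
    have h4 := hcx (L i) Qc
    rw [hCIP i h1 h2] at h3
    calc |lamX v (L (i - 1)) ((Qc : X × X).2) - lamX v (L i) ((Qc : X × X).1)|
        = |(lamC v (xstar (L i)) Qc - lamX v (L i) ((Qc : X × X).1))
            - (lamC v (xstar (L i)) Qc - lamX v (L (i - 1)) ((Qc : X × X).2))| := by
          ring_nf
      _ ≤ _ := by
          refine (abs_sub _ _).trans ?_
          linarith
  set S : ℕ → ℝ := fun j => ∑ i ∈ Finset.range j, (cy (L i) + cx (L (i + 1))) with hS
  have key : ∀ j, j ≤ m → ∀ (Q : PathSpace C) (k : ℕ),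
      |lamX v (L 0) (Q.1 (k + j)) - lamX v (L j) (Q.1 k)| ≤ S j := by
    intro j
    induction j with
    | zero =>
        intro _ Q k
        simp [S]
    | succ j ih =>
        intro hjm Q k
        have hj : j ≤ m := Nat.le_of_succ_le hjm
        have h1 := ih hj Q (k + 1)
        have h2 := step (j + 1) (Nat.le_add_left 1 j) hjm ⟨(Q.1 k, Q.1 (k + 1)), Q.2 k⟩
        simp only [Nat.add_sub_cancel] at h2
        have heq : k + 1 + j = k + (j + 1) := by ring
        rw [heq] at h1
        have : |lamX v (L 0) (Q.1 (k + (j + 1))) - lamX v (L (j + 1)) (Q.1 k)|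
            ≤ S j + (cy (L j) + cx (L (j + 1))) := by
          calc |lamX v (L 0) (Q.1 (k + (j + 1))) - lamX v (L (j + 1)) (Q.1 k)|
              ≤ |lamX v (L 0) (Q.1 (k + (j + 1))) - lamX v (L j) (Q.1 (k + 1))|
                + |lamX v (L j) (Q.1 (k + 1)) - lamX v (L (j + 1)) (Q.1 k)| :=
                abs_sub_le _ _ _
            _ ≤ S j + (cy (L j) + cx (L (j + 1))) := add_le_add h1 h2
        refine this.trans ?_
        simp [hS, Finset.sum_range_succ]
  refine ⟨S m, fun n hn Q => ?_⟩
  rw [pathShift_iter, pathShift_iter]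
  have hnm : 0 + (n - m) + m = 0 + n := by omega
  have := key m le_rfl Q (0 + (n - m))
  rw [hnm, hL0, hLm] at this
  exact this
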